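/- Assume K is invertible and set B = K^{-1}·M. Then for any vectors u_n ∈ ℝ^K and f_0, …, f_N, q̂_0, …, q̂_N ∈ ℝ^K, the following two systems are equivalent: (i) Σ_{q=0}^{N} ( K_{pq} q̂_q − M_{pq} f_q ) = φ_p(0) u_n for all 0 ≤ p ≤ N; (ii) q̂_p − Σ_{q=0}^{N} B_{pq} f_q = u_n for all 0 ≤ p ≤ N. -/
import Mathlib

open Matrix


/-- With `K` invertible and `B = K⁻¹ · M`, for any vectors `uₙ, f_q, q̂_q ∈ ℝ^d`
the DG predictor system `∑_q (K p q • q̂_q − M p q • f_q) = φ_p(0) • uₙ` (for all `p`) is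
equivalent to the reduced system `q̂_p − ∑_q B p q • f_q = uₙ` (for all `p`). -/
theorem ader_dg_predictor_equiv
    (N : ℕ) (hN : 1 ≤ N)
    (τ : Fin (N + 1) → ℝ) (hτ : Function.Injective τ)
    (φ : Fin (N + 1) → Polynomial ℝ)
    (hφdeg : ∀ p, (φ p).natDegree ≤ N)
    (hφ : ∀ p l, (φ p).eval (τ l) = if p = l then 1 else 0)
    (K M : Matrix (Fin (N + 1)) (Fin (N + 1)) ℝ)
    (hK : ∀ p q, K p q =
      (φ p).eval 1 * (φ q).eval 1 -
        ∫ t in (0:ℝ)..1, (Polynomial.derivative (φ p)).eval t * (φ q).eval t)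
    (hM : ∀ p q, M p q = ∫ t in (0:ℝ)..1, (φ p).eval t * (φ q).eval t)
    (hKunit : IsUnit K.det)
    (B : Matrix (Fin (N + 1)) (Fin (N + 1)) ℝ) (hB : B = K⁻¹ * M)
    (d : ℕ) (hd : 1 ≤ d)
    (un : Fin d → ℝ) (f qhat : Fin (N + 1) → Fin d → ℝ) :
    (∀ p, ∑ q, (K p q • qhat q - M p q • f q) = (φ p).eval 0 • un) ↔
      (∀ p, qhat p - ∑ q, B p q • f q = un) := by
  classical
  -- partition of unity: ∑ φ q = 1
  have hpu : (∑ q, φ q) = 1 := by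
    have h0 : (∑ q, φ q) - 1 = 0 := by
      apply Polynomial.eq_zero_of_natDegree_lt_card_of_eval_eq_zero _ hτ
      · intro l
        simp [Polynomial.eval_finset_sum, hφ]
      · calc ((∑ q, φ q) - 1).natDegree ≤ N := by
              apply le_trans (Polynomial.natDegree_sub_le _ _)
              simp only [Polynomial.natDegree_one, max_le_iff]
              exact ⟨Polynomial.natDegree_sum_le_of_forall_le _ _ (fun i _ => hφdeg i), Nat.zero_le N⟩
            _ < Fintype.card (Fin (N + 1)) := by simp
    linear_combination (norm := ring_nf) h0
  have hpu_eval : ∀ t : ℝ, ∑ q, (φ q).eval t = 1 := by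
    intro t
    have := congrArg (Polynomial.eval t) hpu
    simpa [Polynomial.eval_finset_sum] using this
  -- row sums of K equal φ_p(0)
  have hrow : ∀ p, ∑ q, K p q = (φ p).eval 0 := by
    intro p
    have hint : ∀ q : Fin (N + 1), IntervalIntegrable
        (fun t => (Polynomial.derivative (φ p)).eval t * (φ q).eval t)
        MeasureTheory.volume 0 1 := fun q =>
      ((Polynomial.derivative (φ p)).continuous.mul
        (φ q).continuous).intervalIntegrable _ _
    have hsumint : ∑ q, ∫ t in (0:ℝ)..1,
        (Polynomial.derivative (φ p)).eval t * (φ q).eval t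
        = ∫ t in (0:ℝ)..1, (Polynomial.derivative (φ p)).eval t := by
      rw [← intervalIntegral.integral_finset_sum (fun q _ => hint q)]
      congr 1
      ext t
      rw [← Finset.mul_sum, hpu_eval t, mul_one]
    have hftc : ∫ t in (0:ℝ)..1, (Polynomial.derivative (φ p)).eval t
        = (φ p).eval 1 - (φ p).eval 0 := by
      have hd' : deriv (fun t => (φ p).eval t) =
          fun t => (Polynomial.derivative (φ p)).eval t := by
        funext t; exact Polynomial.deriv _
      rw [← hd']
      apply intervalIntegral.integral_deriv_eq_sub
      · intro x _; exact (φ p).differentiable.differentiableAt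
      · rw [hd']
        exact (Polynomial.derivative (φ p)).continuous.intervalIntegrable _ _
    calc ∑ q, K p q
        = (φ p).eval 1 * (∑ q, (φ q).eval 1) -
            ∑ q, ∫ t in (0:ℝ)..1,
              (Polynomial.derivative (φ p)).eval t * (φ q).eval t := by
          simp only [hK, Finset.sum_sub_distrib, Finset.mul_sum]
      _ = (φ p).eval 0 := by rw [hpu_eval, hsumint, hftc]; ring
  -- invertibility facts
  have hKK : K⁻¹ * K = 1 := Matrix.nonsing_inv_mul K hKunit
  have hKKi : K * K⁻¹ = 1 := Matrix.mul_nonsing_inv K hKunit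
  -- componentwise reformulation
  constructor
  · intro h p
    funext i
    have key : ∀ r, (K *ᵥ fun q => qhat q i - un i) r = (M *ᵥ fun q => f q i) r := by
      intro r
      have h1 := congrFun (h r) i
      simp only [Finset.sum_apply, Pi.sub_apply, Pi.smul_apply, smul_eq_mul] at h1
      have h2 : ∑ q, (K r q * qhat q i - M r q * f q i) = (∑ q, K r q) * un i := by
        rw [hrow r]; exact h1
      simp only [Matrix.mulVec, dotProduct]
      calc ∑ q, K r q * (qhat q i - un i)
          = ∑ q, ((K r q * qhat q i - M r q * f q i) - K r q * un i + M r q * f q i) := by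
            apply Finset.sum_congr rfl; intro q _; ring
        _ = (∑ q, (K r q * qhat q i - M r q * f q i)) - (∑ q, K r q) * un i
              + ∑ q, M r q * f q i := by
            rw [Finset.sum_add_distrib, Finset.sum_sub_distrib, Finset.sum_mul]
        _ = ∑ q, M r q * f q i := by rw [h2]; ring
    have hv : (K *ᵥ fun q => qhat q i - un i) = (M *ᵥ fun q => f q i) := funext key
    have := congrArg (fun v => K⁻¹ *ᵥ v) hv
    simp only [Matrix.mulVec_mulVec, hKK, Matrix.one_mulVec] at this
    have hB' := congrFun this p
    simp only [Pi.sub_apply, Finset.sum_apply, Pi.smul_apply, smul_eq_mul]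
    have hBsum : ∑ q, B p q * f q i = ((K⁻¹ * M) *ᵥ fun q => f q i) p := by
      rw [hB]; simp [Matrix.mulVec, dotProduct]
    rw [hBsum]
    linarith [hB']
  · intro h p
    funext i
    simp only [Finset.sum_apply, Pi.sub_apply, Pi.smul_apply, smul_eq_mul]
    have hcomp : ∀ r, qhat r i - (B *ᵥ fun q => f q i) r = un i := by
      intro r
      have h1 := congrFun (h r) i
      simp only [Pi.sub_apply, Finset.sum_apply, Pi.smul_apply, smul_eq_mul] at h1
      simpa [Matrix.mulVec, dotProduct] using h1
    have hv : (fun r => qhat r i) = (fun r => un i) + (B *ᵥ fun q => f q i) := by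
      funext r; have := hcomp r; simp only [Pi.add_apply]; linarith
    have hKv : (K *ᵥ fun r => qhat r i) =
        (K *ᵥ fun r => un i) + (M *ᵥ fun q => f q i) := by
      rw [hv, Matrix.mulVec_add]
      congr 1
      rw [hB, ← Matrix.mulVec_mulVec, Matrix.mulVec_mulVec, hKKi, Matrix.one_mulVec]
    have hp := congrFun hKv p
    simp only [Matrix.mulVec, dotProduct, Pi.add_apply] at hp
    have hKun : ∑ q, K p q * un i = (φ p).eval 0 * un i := by
      rw [← Finset.sum_mul, hrow p]
    rw [Finset.sum_sub_distrib, hp, hKun]; ring
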